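/- arXiv:1904.11278 — 6 statements merged into one kernel-verified Lean document; each statement's English description precedes it below -/
import Mathlib

section
/- Let G = (V, E) be a finite simple graph, and construct a URLLC scheduling instance with users K = V, resource blocks R = E, activity indicator δ_e^v = 1 iff v ∈ e, and demands d_v = deg_G(v). Then there exists a schedule x ∈ {0,1}^{V×E} with x_e^v ≤ δ_e^v for all (v,e), ∑_v x_e^v ≤ 1 for each e ∈ E, and a subset M ⊆ V with |M| ≥ m such that ∑_e x_e^v ≥ d_v for all v ∈ M, if and only if G has an independent set of size at least m. -/
open Finset

lemma filter_incidence_eq {V : Type*} [Fintype V] [DecidableEq V] (G : SimpleGraph V)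
    [DecidableRel G.Adj] (v : V) :
    G.edgeFinset.filter (fun e => v ∈ e) = G.incidenceFinset v := by
  ext e
  simp [SimpleGraph.mem_incidenceFinset, SimpleGraph.incidenceSet,
    SimpleGraph.mem_edgeFinset, and_comm]

/-- in the URLLC instance built from a graph `G` (users = vertices,
resource blocks = edges, block `e` active for user `v` iff `v ∈ e`, demand
`d_v = deg v`), there is a schedule satisfying at least `m` users iff `G` has an
independent set of size at least `m`. -/
theorem stmt_1 {V : Type*} [Fintype V] [DecidableEq V] (G : SimpleGraph V)
    [DecidableRel G.Adj] (m : ℕ) :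
    (∃ x : V → Sym2 V → Bool, ∃ M : Finset V,
        (∀ v e, x v e = true → e ∈ G.edgeFinset ∧ v ∈ e) ∧
        (∀ e : Sym2 V, (Finset.univ.filter (fun v => x v e = true)).card ≤ 1) ∧
        m ≤ M.card ∧
        (∀ v ∈ M, G.degree v ≤ (G.edgeFinset.filter (fun e => x v e = true)).card)) ↔
      (∃ S : Finset V, m ≤ S.card ∧ (S : Set V).Pairwise (fun u v => ¬ G.Adj u v)) := by
  constructor
  · rintro ⟨x, M, hsub, hone, hm, hdem⟩
    refine ⟨M, hm, ?_⟩
    -- For v ∈ M, x v e = true for every incident edge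
    have hall : ∀ v ∈ M, ∀ e ∈ G.incidenceFinset v, x v e = true := by
      intro v hv
      have hsub' : G.edgeFinset.filter (fun e => x v e = true) ⊆ G.incidenceFinset v := by
        intro e he
        rw [← filter_incidence_eq]
        simp only [mem_filter] at he ⊢
        exact ⟨he.1, (hsub v e he.2).2⟩
      have hcard : (G.incidenceFinset v).card ≤
          (G.edgeFinset.filter (fun e => x v e = true)).card := by
        rw [G.card_incidenceFinset_eq_degree v]
        exact hdem v hv
      have heq := Finset.eq_of_subset_of_card_le hsub' hcard
      intro e he
      have : e ∈ G.edgeFinset.filter (fun e => x v e = true) := heq ▸ he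
      exact (mem_filter.mp this).2
    intro u hu v hv huv hadj
    have he : s(u, v) ∈ G.edgeFinset := by
      rw [SimpleGraph.mem_edgeFinset]; exact hadj
    have hxu : x u s(u, v) = true := hall u hu _ (by
      rw [SimpleGraph.mem_incidenceFinset]; exact ⟨SimpleGraph.mem_edgeFinset.mp he, Sym2.mem_mk_left u v⟩)
    have hxv : x v s(u, v) = true := hall v hv _ (by
      rw [SimpleGraph.mem_incidenceFinset]; exact ⟨SimpleGraph.mem_edgeFinset.mp he, Sym2.mem_mk_right u v⟩)
    have h2 : ({u, v} : Finset V) ⊆ Finset.univ.filter (fun w => x w s(u, v) = true) := by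
      intro w hw
      simp only [mem_insert, mem_singleton] at hw
      rcases hw with rfl | rfl <;> simp [hxu, hxv]
    have := Finset.card_le_card h2
    rw [Finset.card_pair huv] at this
    exact absurd (this.trans (hone s(u, v))) (by norm_num)
  · rintro ⟨S, hm, hind⟩
    refine ⟨fun v e => decide (v ∈ S ∧ e ∈ G.edgeFinset ∧ v ∈ e), S, ?_, ?_, hm, ?_⟩
    · intro v e h
      simp only [decide_eq_true_eq] at h
      exact ⟨h.2.1, h.2.2⟩
    · intro e
      rw [Finset.card_le_one]
      intro a ha b hb
      simp only [mem_filter, decide_eq_true_eq] at ha hb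
      by_contra hab
      obtain ⟨haS, heE, hae⟩ := ha.2
      obtain ⟨hbS, _, hbe⟩ := hb.2
      have : e = s(a, b) := by
        induction e with
        | h p q =>
          rw [Sym2.mem_iff] at hae hbe
          rcases hae with rfl | rfl <;> rcases hbe with rfl | rfl <;>
            first | exact absurd rfl hab | simp [Sym2.eq_swap]
      rw [this, SimpleGraph.mem_edgeFinset, SimpleGraph.mem_edgeSet] at heE
      exact hind haS hbS hab heE
    · intro v hv
      have : G.edgeFinset.filter
          (fun e => decide (v ∈ S ∧ e ∈ G.edgeFinset ∧ v ∈ e) = true) =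
          G.incidenceFinset v := by
        rw [← filter_incidence_eq]
        apply Finset.filter_congr
        intro e he
        simp [he, hv]
      rw [this, G.card_incidenceFinset_eq_degree v]
end

section
/- Let A be a totally unimodular m × n matrix and b ∈ ℤ^m an integer vector. Then every vertex (extreme point) of the polyhedron P = { x ∈ ℝⁿ : A x ≤ b, x ≥ 0 } has all integer coordinates. -/
open Matrix Finset

/-- Auxiliary: choose a uniform `ε` bounded by all positive slacks. -/
lemma aux_eps {ι : Type*} [Fintype ι] [Nonempty ι] (slack d : ι → ℝ)
    (hslack : ∀ k, 0 ≤ slack k) (hd : ∀ k, slack k = 0 → d k = 0) :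
    ∃ ε : ℝ, 0 < ε ∧ ∀ k, ε * |d k| ≤ slack k := by
  classical
  set ε : ℝ := Finset.univ.inf' Finset.univ_nonempty
    (fun k => if slack k = 0 then 1 else slack k / (|d k| + 1)) with hε
  have hεpos : 0 < ε := by
    rw [hε, Finset.lt_inf'_iff]
    intro k _
    split_ifs with h
    · norm_num
    · have h1 : 0 < slack k := lt_of_le_of_ne (hslack k) (Ne.symm h)
      positivity
  refine ⟨ε, hεpos, fun k => ?_⟩
  by_cases h : slack k = 0
  · rw [hd k h, abs_zero, mul_zero, h]
  · have h1 : 0 < slack k := lt_of_le_of_ne (hslack k) (Ne.symm h)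
    have h2 : ε ≤ (if slack k = 0 then 1 else slack k / (|d k| + 1)) :=
      Finset.inf'_le _ (Finset.mem_univ k)
    rw [if_neg h] at h2
    have h3 : 0 ≤ |d k| := abs_nonneg _
    have h4 : 0 < |d k| + 1 := by linarith
    have h5 : ε * |d k| ≤ slack k / (|d k| + 1) * |d k| :=
      mul_le_mul_of_nonneg_right h2 h3
    have h6 : slack k / (|d k| + 1) * |d k| ≤ slack k := by
      rw [div_mul_eq_mul_div, div_le_iff₀ h4]
      nlinarith
    linarith

/-- Auxiliary: at an extreme point, any direction orthogonal to all tight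
constraints must vanish. -/
lemma aux_dir {m n : ℕ} (A : Matrix (Fin m) (Fin n) ℝ) (b : Fin m → ℤ)
    {x : Fin n → ℝ} (hn : Nonempty (Fin n))
    (hx : x ∈ Set.extremePoints ℝ
      {x : Fin n → ℝ | (∀ i, 0 ≤ x i) ∧ ∀ j, ∑ i, A j i * x i ≤ (b j : ℝ)})
    (y : Fin n → ℝ)
    (hy1 : ∀ i, x i = 0 → y i = 0)
    (hy2 : ∀ j, ∑ i, A j i * x i = (b j : ℝ) → ∑ i, A j i * y i = 0) :
    y = 0 := by
  classical
  obtain ⟨⟨hx0, hxA⟩, hext⟩ := hx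
  set slack : Fin m ⊕ Fin n → ℝ :=
    Sum.elim (fun j => (b j : ℝ) - ∑ i, A j i * x i) x with hslack_def
  set d : Fin m ⊕ Fin n → ℝ :=
    Sum.elim (fun j => ∑ i, A j i * y i) y with hd_def
  have hslack : ∀ k, 0 ≤ slack k := by
    rintro (j | i)
    · simpa [hslack_def] using sub_nonneg.2 (hxA j)
    · simpa [hslack_def] using hx0 i
  have hd : ∀ k, slack k = 0 → d k = 0 := by
    rintro (j | i) h
    · simp only [hslack_def, Sum.elim_inl] at h
      simpa [hd_def] using hy2 j (by linarith)
    · simp only [hslack_def, Sum.elim_inr] at h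
      simpa [hd_def] using hy1 i h
  obtain ⟨ε, hεpos, hεk⟩ := aux_eps slack d hslack hd
  -- any perturbation of size at most ε stays in the polyhedron
  have hmem : ∀ t : ℝ, |t| ≤ ε →
      (x + t • y) ∈ {x : Fin n → ℝ | (∀ i, 0 ≤ x i) ∧ ∀ j, ∑ i, A j i * x i ≤ (b j : ℝ)} := by
    intro t ht
    constructor
    · intro i
      have h1 : |t * y i| ≤ x i := by
        rw [abs_mul]
        calc |t| * |y i| ≤ ε * |y i| := mul_le_mul_of_nonneg_right ht (abs_nonneg _)
          _ ≤ x i := by simpa [hslack_def, hd_def] using hεk (Sum.inr i)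
      have h2 := neg_abs_le (t * y i)
      simp only [Pi.add_apply, Pi.smul_apply, smul_eq_mul]
      linarith
    · intro j
      have hsum : ∑ i, A j i * (x + t • y) i
          = (∑ i, A j i * x i) + t * ∑ i, A j i * y i := by
        rw [Finset.mul_sum, ← Finset.sum_add_distrib]
        refine Finset.sum_congr rfl fun i _ => ?_
        simp only [Pi.add_apply, Pi.smul_apply, smul_eq_mul]
        ring
      have h1 : |t * ∑ i, A j i * y i| ≤ (b j : ℝ) - ∑ i, A j i * x i := by
        rw [abs_mul]
        calc |t| * |∑ i, A j i * y i| ≤ ε * |∑ i, A j i * y i| :=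
              mul_le_mul_of_nonneg_right ht (abs_nonneg _)
          _ ≤ (b j : ℝ) - ∑ i, A j i * x i := by
              simpa [hslack_def, hd_def] using hεk (Sum.inl j)
      have h2 := le_abs_self (t * ∑ i, A j i * y i)
      rw [hsum]; linarith
  have h₁ := hmem ε (by rw [abs_of_pos hεpos])
  have h₂ := hmem (-ε) (by rw [abs_neg, abs_of_pos hεpos])
  have hseg : x ∈ openSegment ℝ (x + ε • y) (x + (-ε) • y) := by
    refine ⟨1/2, 1/2, by norm_num, by norm_num, by norm_num, ?_⟩
    funext i
    simp only [Pi.add_apply, Pi.smul_apply, smul_eq_mul]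
    ring
  have he := hext h₁ h₂ hseg
  have : ε • y = 0 := by
    have := congrArg (fun z => z - x) he
    simpa [add_sub_cancel_left] using this
  rcases smul_eq_zero.1 this with h | h
  · exact absurd h (ne_of_gt hεpos)
  · exact h

/-- every extreme point of `{x : A x ≤ b, x ≥ 0}` with `A` totally
unimodular and `b` integral has integer coordinates. -/
theorem stmt_7 {m n : ℕ} (A : Matrix (Fin m) (Fin n) ℝ) (hA : A.IsTotallyUnimodular)
    (b : Fin m → ℤ) :
    ∀ x ∈ Set.extremePoints ℝ
        {x : Fin n → ℝ | (∀ i, 0 ≤ x i) ∧ ∀ j, ∑ i, A j i * x i ≤ (b j : ℝ)},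
      ∀ i, ∃ z : ℤ, x i = (z : ℝ) := by
  classical
  intro x hx i0
  have hn : Nonempty (Fin n) := ⟨i0⟩
  set M : Matrix (Fin m ⊕ Fin n) (Fin n) ℝ := Matrix.fromRows A 1 with hM
  have hMtu : M.IsTotallyUnimodular := hA.fromRows_one
  set T : Set (Fin m ⊕ Fin n) :=
    {k | Sum.elim (fun j => ∑ i, A j i * x i = (b j : ℝ)) (fun i => x i = 0) k} with hT
  -- Step 1: the tight rows span the whole space
  have hspan : Submodule.span ℝ (Set.range (fun k : T => M (k : Fin m ⊕ Fin n))) = ⊤ := by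
    by_contra hne
    obtain ⟨f, hf0, hfmap⟩ := Submodule.exists_dual_map_eq_bot_of_lt_top
      (lt_top_iff_ne_top.2 hne) inferInstance
    set y : Fin n → ℝ := fun i => f (fun j => if i = j then 1 else 0) with hy
    have hfy : ∀ v : Fin n → ℝ, f v = ∑ i, v i * y i := by
      intro v
      conv_lhs => rw [pi_eq_sum_univ v]
      rw [map_sum]
      exact Finset.sum_congr rfl fun i _ => by rw [LinearMap.map_smul, smul_eq_mul]
    have hrow : ∀ k ∈ T, f (M k) = 0 := by
      intro k hk
      have h1 : M k ∈ Submodule.span ℝ (Set.range fun k : T => M (k : Fin m ⊕ Fin n)) :=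
        Submodule.subset_span ⟨⟨k, hk⟩, rfl⟩
      have h2 := Submodule.mem_map_of_mem (f := f) h1
      rw [hfmap] at h2
      simpa using h2
    have hy0 : y = 0 := by
      apply aux_dir A b hn hx
      · intro i hxi
        have h3 := hrow (Sum.inr i) (by simp [hT, hxi])
        rw [hfy] at h3
        simpa [hM, Matrix.one_apply] using h3
      · intro j hj
        have h3 := hrow (Sum.inl j) (by simp [hT, hj])
        rw [hfy] at h3
        simpa [hM] using h3
    apply hf0
    apply LinearMap.ext
    intro v
    rw [hfy, hy0]
    simp
  -- Step 2: select a basis among the tight rows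
  obtain ⟨s, hs_sub, hs_span, hs_li⟩ :=
    exists_linearIndependent ℝ (Set.range fun k : T => M (k : Fin m ⊕ Fin n))
  rw [hspan] at hs_span
  haveI : Finite s := hs_li.finite
  haveI : Fintype s := Fintype.ofFinite _
  let bas : Module.Basis s ℝ (Fin n → ℝ) :=
    Module.Basis.mk hs_li (by rw [Subtype.range_coe, hs_span])
  have hcard : Fintype.card s = n := by
    have h := Module.finrank_eq_card_basis bas
    rw [Module.finrank_fin_fun] at h
    exact h.symm
  let e : Fin n ≃ s := (Fintype.equivFinOfCardEq hcard).symm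
  have hrows : ∀ v : s, ∃ k : Fin m ⊕ Fin n, k ∈ T ∧ (v : Fin n → ℝ) = M k := by
    intro v
    obtain ⟨⟨k, hk⟩, hkv⟩ := hs_sub v.2
    exact ⟨k, hk, hkv.symm⟩
  choose g hgT hgM using hrows
  set B : Matrix (Fin n) (Fin n) ℝ := M.submatrix (fun p => g (e p)) id with hB
  have hBrows : ∀ p, B p = ((e p : Fin n → ℝ)) := by
    intro p
    funext i
    rw [hB, Matrix.submatrix_apply, id_eq, ← hgM (e p)]
  have hBunit : IsUnit B := by
    rw [← Matrix.linearIndependent_rows_iff_isUnit]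
    have h : B.row = (fun v : s => (v : Fin n → ℝ)) ∘ e := funext hBrows
    rw [h]
    exact hs_li.comp e e.injective
  have hBtu : B.IsTotallyUnimodular := hMtu.submatrix _ _
  -- Step 3: B is an integer matrix with unit determinant
  have hent : ∀ p i, ∃ z : ℤ, B p i = (z : ℝ) := by
    intro p i
    obtain ⟨sg, hsg⟩ := hBtu.apply p i
    exact ⟨(sg : ℤ), by rw [← hsg]; cases sg <;> simp⟩
  choose B' hB' using hent
  set B₀ : Matrix (Fin n) (Fin n) ℤ := Matrix.of B' with hB₀
  have hBmap : B₀.map (Int.castRingHom ℝ) = B := by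
    ext p i
    simp [hB₀, hB' p i]
  have hdetc : ((B₀.det : ℤ) : ℝ) = B.det := by
    rw [← hBmap]
    exact ((Int.castRingHom ℝ).map_det B₀)
  have hdet0 : B.det ≠ 0 := ((Matrix.isUnit_iff_isUnit_det B).1 hBunit).ne_zero
  have hdet : IsUnit B₀.det := by
    obtain ⟨sg, hsg⟩ := (Matrix.isTotallyUnimodular_iff M).1 hMtu n (fun p => g (e p)) id
    rw [← hB] at hsg
    rw [Int.isUnit_iff]
    cases sg with
    | zero => exact absurd (by rw [← hsg]; simp) hdet0
    | pos =>
        left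
        have h : ((B₀.det : ℤ) : ℝ) = 1 := by rw [hdetc, ← hsg]; simp
        exact_mod_cast h
    | neg =>
        right
        have h : ((B₀.det : ℤ) : ℝ) = -1 := by rw [hdetc, ← hsg]; simp
        exact_mod_cast h
  -- Step 4: solve the tight system over ℤ
  set c : Fin n → ℤ := fun p => Sum.elim b (fun _ => 0) (g (e p)) with hc
  have hsys : B.mulVec x = fun p => (c p : ℝ) := by
    funext p
    rw [Matrix.mulVec, dotProduct]
    have hk := hgT (e p)
    rcases hgp : g (e p) with j | i
    · rw [hgp] at hk
      simp only [hT, Set.mem_setOf_eq, Sum.elim_inl] at hk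
      calc ∑ i, B p i * x i = ∑ i, A j i * x i := by
            refine Finset.sum_congr rfl fun i _ => ?_
            rw [hB, Matrix.submatrix_apply, id_eq, hgp, hM, Matrix.fromRows_apply_inl]
        _ = (b j : ℝ) := hk
        _ = (c p : ℝ) := by rw [hc]; simp [hgp]
    · rw [hgp] at hk
      simp only [hT, Set.mem_setOf_eq, Sum.elim_inr] at hk
      have h : ∑ i', B p i' * x i' = x i := by
        have h2 : ∀ i', B p i' = (if i = i' then (1:ℝ) else 0) := by
          intro i'
          rw [hB, Matrix.submatrix_apply, id_eq, hgp, hM, Matrix.fromRows_apply_inr,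
            Matrix.one_apply]
        simp [h2]
      rw [h, hk, hc]
      simp [hgp]
  set z : Fin n → ℤ := B₀⁻¹.mulVec c with hz
  have hmul : B₀⁻¹.map (Int.castRingHom ℝ) * B = 1 := by
    rw [← hBmap]
    have h := Matrix.map_mul (L := B₀⁻¹) (M := B₀) (f := Int.castRingHom ℝ)
    rw [Matrix.nonsing_inv_mul _ hdet] at h
    rw [← h, Matrix.map_one _ (map_zero _) (map_one _)]
  have hx_eq : x = fun i => (z i : ℝ) := by
    have h1 : (B₀⁻¹.map (Int.castRingHom ℝ)).mulVec (B.mulVec x) = x := by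
      rw [Matrix.mulVec_mulVec, hmul, Matrix.one_mulVec]
    rw [hsys] at h1
    rw [← h1]
    funext i
    have := (Int.castRingHom ℝ).map_mulVec B₀⁻¹ c i
    simpa [hz, Function.comp_def] using this.symm
  exact ⟨z i0, by rw [hx_eq]⟩
end

section
/- Consider the binary-SNR admission problem with users K, resource blocks R, activity indicators δ_r^k ∈ {0,1}, demands d_k ≤ d for all k, and unit utilities, where every user has at least d_k active blocks. Let K₁ be the set of users admitted by the greedy algorithm (which processes users in some order, assigns each user exactly d_k available active blocks if possible, and otherwise rejects it), with R₁ the set of blocks it uses. Then for any admission z* with a feasible schedule, ∑_k z*^k ≤ |R₁| + |K₁|. -/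
open Finset

/-- in the binary SNR admission problem with unit utilities, if `K₁` are
the users admitted by greedy, using block set `R₁` (so that no rejected user can be
satisfied with active blocks outside `R₁`), then any feasibly admitted set `Z`
satisfies `|Z| ≤ |R₁| + |K₁|`. -/
theorem stmt_9 {ι ρ : Type*} [Fintype ι] [Fintype ρ] [DecidableEq ι] [DecidableEq ρ]
    (δ : ι → ρ → Bool) (dem : ι → ℕ) (d : ℕ)
    (hd : ∀ k, dem k ≤ d)
    (hactive : ∀ k, dem k ≤ (Finset.univ.filter (fun r => δ k r = true)).card)
    (K₁ : Finset ι) (R₁ : Finset ρ)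
    (hmax : ∀ k ∉ K₁, ((Finset.univ.filter (fun r => δ k r = true)) \ R₁).card < dem k)
    (Z : Finset ι) (y : ι → Finset ρ)
    (hy1 : ∀ k ∈ Z, y k ⊆ Finset.univ.filter (fun r => δ k r = true))
    (hy2 : ∀ k ∈ Z, dem k ≤ (y k).card)
    (hy3 : (Z : Set ι).PairwiseDisjoint y) :
    Z.card ≤ R₁.card + K₁.card := by
  classical
  have key : ∀ k ∈ Z \ K₁, ((y k) ∩ R₁).Nonempty := by
    intro k hk
    rw [mem_sdiff] at hk
    have h3 : (y k \ R₁).card < (y k).card := by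
      calc (y k \ R₁).card
          ≤ ((Finset.univ.filter (fun r => δ k r = true)) \ R₁).card :=
            card_le_card (sdiff_subset_sdiff (hy1 k hk.1) le_rfl)
        _ < dem k := hmax k hk.2
        _ ≤ (y k).card := hy2 k hk.1
    by_contra hne
    have hsub : y k ⊆ y k \ R₁ := by
      intro x hx
      rw [mem_sdiff]
      refine ⟨hx, fun hxR => hne ⟨x, mem_inter.2 ⟨hx, hxR⟩⟩⟩
    exact absurd (card_le_card hsub) (not_le.2 h3)
  have hcard : (Z \ K₁).card ≤ R₁.card := by
    rcases (Z \ K₁).eq_empty_or_nonempty with h | ⟨k0, hk0⟩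
    · simp [h]
    · obtain ⟨r0, _⟩ := key k0 hk0
      choose f hf using key
      apply Finset.card_le_card_of_injOn (fun k => if h : k ∈ Z \ K₁ then f k h else r0)
      · intro k hk
        have hk' : k ∈ Z \ K₁ := Finset.mem_coe.1 hk
        simp only [dif_pos hk']
        exact (mem_inter.1 (hf k hk')).2
      · intro a ha b hb hab
        simp only [Finset.mem_coe] at ha hb
        simp only [dif_pos ha, dif_pos hb] at hab
        by_contra hne
        have hdisj : Disjoint (y a) (y b) :=
          hy3 (Finset.mem_coe.2 (mem_sdiff.1 ha).1) (Finset.mem_coe.2 (mem_sdiff.1 hb).1) hne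
        have ha' : f a ha ∈ y a := (mem_inter.1 (hf a ha)).1
        have hb' : f b hb ∈ y b := (mem_inter.1 (hf b hb)).1
        exact (Finset.disjoint_left.1 hdisj ha') (hab ▸ hb')
  have hsplit : Z.card = (Z \ K₁).card + (Z ∩ K₁).card := by
    rw [← Finset.card_sdiff_add_card_inter Z K₁]
  have hZK : (Z ∩ K₁).card ≤ K₁.card := card_le_card (inter_subset_right)
  omega
end

section
/- Under the assumptions of the greedy admission algorithm for the binary SNR model (each admitted user consumes exactly d_k ≤ d blocks, and no rejected user can be satisfied using only unused blocks), the number of users admitted by greedy is at least 1/(d+1) times the maximum number of simultaneously schedulable users. -/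
open Finset

/-- under the greedy-maximality assumptions (greedy admits `K₁` using
blocks `R₁` with `|R₁| ≤ d|K₁|`, and no rejected user can be satisfied from the unused
blocks), every schedulable set `Z` satisfies `|Z| ≤ (d+1)|K₁|`, i.e. greedy achieves at
least a `1/(d+1)` fraction of the optimum. -/
theorem stmt_10 {ι ρ : Type*} [Fintype ι] [Fintype ρ] [DecidableEq ι] [DecidableEq ρ]
    (δ : ι → ρ → Bool) (dem : ι → ℕ) (d : ℕ)
    (hd : ∀ k, dem k ≤ d)
    (hactive : ∀ k, dem k ≤ (Finset.univ.filter (fun r => δ k r = true)).card)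
    (K₁ : Finset ι) (R₁ : Finset ρ)
    (hR : R₁.card ≤ d * K₁.card)
    (hmax : ∀ k ∉ K₁, ((Finset.univ.filter (fun r => δ k r = true)) \ R₁).card < dem k) :
    ∀ (Z : Finset ι) (y : ι → Finset ρ),
      (∀ k ∈ Z, y k ⊆ Finset.univ.filter (fun r => δ k r = true)) →
      (∀ k ∈ Z, dem k ≤ (y k).card) →
      (Z : Set ι).PairwiseDisjoint y →
      Z.card ≤ (d + 1) * K₁.card := by
  intro Z y hsub hdem hdisj
  -- every rejected user in Z must use at least one block of R₁
  have hone : ∀ k ∈ Z \ K₁, 1 ≤ (y k ∩ R₁).card := by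
    intro k hk
    rw [Finset.mem_sdiff] at hk
    by_contra h
    push_neg at h
    interval_cases h' : (y k ∩ R₁).card
    have hyk : y k ⊆ (Finset.univ.filter (fun r => δ k r = true)) \ R₁ := by
      intro r hr
      rw [Finset.mem_sdiff]
      refine ⟨hsub k hk.1 hr, fun hrR => ?_⟩
      have : r ∈ y k ∩ R₁ := Finset.mem_inter.2 ⟨hr, hrR⟩
      simp [Finset.card_eq_zero.mp h'] at this
    have := Finset.card_le_card hyk
    have := hmax k hk.2
    have := hdem k hk.1
    omega
  -- the sets y k ∩ R₁ for k ∈ Z \ K₁ are pairwise disjoint subsets of R₁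
  have hdisj' : ∀ k ∈ Z \ K₁, ∀ k' ∈ Z \ K₁, k ≠ k' →
      Disjoint (y k ∩ R₁) (y k' ∩ R₁) := by
    intro k hk k' hk' hne
    rw [Finset.mem_sdiff] at hk hk'
    exact (hdisj hk.1 hk'.1 hne).mono inter_subset_left inter_subset_left
  have hcard : (Z \ K₁).card ≤ R₁.card := by
    calc (Z \ K₁).card = ∑ k ∈ Z \ K₁, 1 := by simp
    _ ≤ ∑ k ∈ Z \ K₁, (y k ∩ R₁).card := Finset.sum_le_sum hone
    _ = ((Z \ K₁).biUnion (fun k => y k ∩ R₁)).card :=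
        (Finset.card_biUnion hdisj').symm
    _ ≤ R₁.card := Finset.card_le_card (by
        intro r hr
        rw [Finset.mem_biUnion] at hr
        obtain ⟨k, _, hk⟩ := hr
        exact (Finset.mem_inter.1 hk).2)
  have h1 : Z.card ≤ (Z \ K₁).card + K₁.card := by
    have := Finset.card_le_card (Finset.sdiff_subset_sdiff (Finset.Subset.refl Z)
      (Finset.empty_subset K₁))
    have := Finset.card_sdiff_add_card Z K₁
    have := Finset.card_le_card (Finset.subset_union_left (s₁ := Z) (s₂ := K₁))
    omega
  calc Z.card ≤ (Z \ K₁).card + K₁.card := h1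
  _ ≤ d * K₁.card + K₁.card := by omega
  _ = (d + 1) * K₁.card := by ring
end

section
/- Let A₁ = −[I_M | I_M | ⋯ | I_M] (M rows, RM columns) and A₂ be the R × RM matrix whose r-th row is the indicator of columns (r−1)M+1,…,rM. Then the stacked matrix [A₁ᵀ | A₂ᵀ | I_{RM}]ᵀ is totally unimodular. -/
open Matrix

private lemma det_single_col {k : ℕ} (S : Matrix (Fin (k+1)) (Fin (k+1)) ℚ)
    (i₀ j : Fin (k+1)) (h : ∀ i, i ≠ i₀ → S i j = 0) :
    S.det = (-1 : ℚ) ^ ((i₀ : ℕ) + (j : ℕ)) * S i₀ j *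
      (S.submatrix i₀.succAbove j.succAbove).det := by
  rw [det_succ_column S j]
  exact Fintype.sum_eq_single i₀ fun i hi => by simp [h i hi]

private lemma sum_indicator_eq_one {k : ℕ} {m : Type*} [DecidableEq m]
    {f : Fin k → m} (hf : f.Injective) {a : m} {i₀ : Fin k} (h : f i₀ = a) :
    (∑ i, (if f i = a then (1 : ℚ) else 0)) = 1 := by
  rw [Finset.sum_eq_single_of_mem i₀ (Finset.mem_univ _)]
  · simp [h]
  · intro i _ hi
    have : f i ≠ a := fun hfa => hi (hf (hfa.trans h.symm))
    simp [this]

private lemma incidence_TU {m n : Type*} [DecidableEq m] (pos neg : n → m)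
    (B : Matrix m n ℚ)
    (hB : ∀ i j, B i j = (if i = pos j then 1 else 0) - (if i = neg j then 1 else 0)) :
    B.IsTotallyUnimodular := by
  intro k f g hf hg
  clear hg
  induction k with
  | zero => exact ⟨1, by simp⟩
  | succ k ih =>
    by_cases hall : ∀ j : Fin (k+1),
        (∃ i, f i = pos (g j)) ∧ (∃ i, f i = neg (g j)) ∧ pos (g j) ≠ neg (g j)
    · -- every column has a +1 and a -1 so the rows sum to zero
      refine ⟨0, ?_⟩
      symm
      rw [SignType.coe_zero, ← Matrix.exists_vecMul_eq_zero_iff]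
      refine ⟨1, one_ne_zero, ?_⟩
      ext j
      obtain ⟨⟨i₁, hi₁⟩, ⟨i₂, hi₂⟩, _⟩ := hall j
      simp only [vecMul, dotProduct, Pi.one_apply, one_mul, submatrix_apply, Pi.zero_apply]
      simp only [hB]
      rw [Finset.sum_sub_distrib, sum_indicator_eq_one hf hi₁, sum_indicator_eq_one hf hi₂]
      ring
    · push_neg at hall
      obtain ⟨j, hj⟩ := hall
      by_cases hzero : ∀ i, (B.submatrix f g) i j = 0
      · exact ⟨0, by rw [SignType.coe_zero]; exact (det_eq_zero_of_column_eq_zero j hzero).symm⟩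
      · push_neg at hzero
        obtain ⟨i₀, hi₀⟩ := hzero
        have hsingle : ∀ i, i ≠ i₀ → (B.submatrix f g) i j = 0 := by
          intro i hi
          have hne : f i ≠ f i₀ := fun h => hi (hf h)
          simp only [submatrix_apply, hB] at hi₀ ⊢
          by_cases hp : ∃ i', f i' = pos (g j)
          · by_cases hn : ∃ i', f i' = neg (g j)
            · have hpn : pos (g j) = neg (g j) := hj hp hn
              rw [← hpn, sub_self] at hi₀
              exact absurd rfl hi₀
            · have h1 : f i ≠ neg (g j) := fun h => hn ⟨i, h⟩
              have h2 : f i₀ = pos (g j) := by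
                by_contra h2
                have h3 : f i₀ ≠ neg (g j) := fun h => hn ⟨i₀, h⟩
                simp [h2, h3] at hi₀
              have h4 : f i ≠ pos (g j) := h2 ▸ hne
              simp [h1, h4]
          · have h1 : f i ≠ pos (g j) := fun h => hp ⟨i, h⟩
            have h2 : f i₀ = neg (g j) := by
              by_contra h2
              have h3 : f i₀ ≠ pos (g j) := fun h => hp ⟨i₀, h⟩
              simp [h2, h3] at hi₀
            have h4 : f i ≠ neg (g j) := h2 ▸ hne
            simp [h1, h4]
        have hd := ih (f ∘ i₀.succAbove) (g ∘ j.succAbove)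
          (hf.comp Fin.succAbove_right_injective)
        have hval : (B.submatrix f g) i₀ j ∈ Set.range SignType.cast := by
          simp only [submatrix_apply, hB]
          by_cases hp : f i₀ = pos (g j) <;> by_cases hn : f i₀ = neg (g j)
          · exact ⟨0, by simp [hp, hn, hp.symm.trans hn]⟩
          · have hx : pos (g j) ≠ neg (g j) := fun h => hn (hp.trans h)
            exact ⟨1, by simp [hp, hn, hx]⟩
          · have hx : neg (g j) ≠ pos (g j) := fun h => hp (hn.trans h)
            exact ⟨-1, by simp [hp, hn, hx]⟩
          · exact ⟨0, by simp [hp, hn]⟩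
        rw [det_single_col _ i₀ j hsingle, submatrix_submatrix]
        change _ ∈ MonoidHom.mrange SignType.castHom.toMonoidHom
        refine mul_mem (mul_mem ?_ hval) hd
        apply pow_mem
        exact ⟨-1, by simp⟩

/-- the full constraint matrix `[A₁ᵀ | A₂ᵀ | I_{RM}]ᵀ` of the relaxed
URLLC scheduling LP, with `A₁ = -[I_M | ⋯ | I_M]` and `A₂` the per-block row
indicators, is totally unimodular. -/
theorem stmt_14 (M R : ℕ)
    (A : Matrix ((Fin M ⊕ Fin R) ⊕ (Fin R × Fin M)) (Fin R × Fin M) ℚ)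
    (h₁ : ∀ (k : Fin M) (c : Fin R × Fin M),
      A (Sum.inl (Sum.inl k)) c = if c.2 = k then -1 else 0)
    (h₂ : ∀ (r : Fin R) (c : Fin R × Fin M),
      A (Sum.inl (Sum.inr r)) c = if c.1 = r then 1 else 0)
    (h₃ : ∀ (c' c : Fin R × Fin M),
      A (Sum.inr c') c = if c' = c then 1 else 0) :
    A.IsTotallyUnimodular := by
  have hA : A = fromRows (A.submatrix Sum.inl id) (1 : Matrix (Fin R × Fin M) _ ℚ) := by
    ext i c
    cases i with
    | inl i => simp [fromRows_apply_inl]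
    | inr c' => simp [fromRows_apply_inr, h₃, one_apply]
  rw [hA, fromRows_one_isTotallyUnimodular_iff]
  apply incidence_TU (fun c => Sum.inr c.1) (fun c => Sum.inl c.2)
  intro i c
  simp only [submatrix_apply, id_eq]
  cases i with
  | inl k =>
    rw [h₁ k c]
    by_cases h : c.2 = k
    · simp [h]
    · have hx : ¬k = c.2 := fun e => h e.symm
      simp [h, hx]
  | inr r =>
    rw [h₂ r c]
    by_cases h : c.1 = r
    · simp [h]
    · have hx : ¬r = c.1 := fun e => h e.symm
      simp [h, hx]
end

section
/- In the binary SNR admission problem with all demands d_k = d and unit rewards, if the greedy algorithm admits the set K₁ using block set R₁, then |R₁| = d·|K₁|, and any feasible admitted set has size at most d·|K₁| + |K₁|. -/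
open Finset

/-- with all demands equal to `d` and unit rewards, if greedy admits `K₁`
assigning each admitted user exactly `d` active blocks (set `g k`), with `R₁` the union
of used blocks, then `|R₁| = d|K₁|` and any feasibly admitted set has size at most
`d|K₁| + |K₁|`. -/
theorem stmt_15 {ι ρ : Type*} [Fintype ι] [Fintype ρ] [DecidableEq ι] [DecidableEq ρ]
    (δ : ι → ρ → Bool) (d : ℕ)
    (K₁ : Finset ι) (R₁ : Finset ρ) (g : ι → Finset ρ)
    (hg1 : ∀ k ∈ K₁, g k ⊆ Finset.univ.filter (fun r => δ k r = true))
    (hg2 : ∀ k ∈ K₁, (g k).card = d)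
    (hg3 : (K₁ : Set ι).PairwiseDisjoint g)
    (hR : R₁ = K₁.biUnion g)
    (hmax : ∀ k ∉ K₁, ((Finset.univ.filter (fun r => δ k r = true)) \ R₁).card < d) :
    R₁.card = d * K₁.card ∧
    ∀ (Z : Finset ι) (y : ι → Finset ρ),
      (∀ k ∈ Z, y k ⊆ Finset.univ.filter (fun r => δ k r = true)) →
      (∀ k ∈ Z, d ≤ (y k).card) →
      (Z : Set ι).PairwiseDisjoint y →
      Z.card ≤ d * K₁.card + K₁.card := by
  classical
  have h1 : R₁.card = d * K₁.card := by
    rw [hR, Finset.card_biUnion (fun a ha b hb hab => hg3 ha hb hab)]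
    rw [Finset.sum_congr rfl hg2]
    simp [mul_comm]
  refine ⟨h1, ?_⟩
  intro Z y hy1 hy2 hy3
  have key : ∀ k ∈ Z \ K₁, (y k ∩ R₁).Nonempty := by
    intro k hk
    rw [Finset.mem_sdiff] at hk
    by_contra h
    rw [Finset.not_nonempty_iff_eq_empty] at h
    have hsub : y k ⊆ (Finset.univ.filter (fun r => δ k r = true)) \ R₁ := by
      intro r hr
      rw [Finset.mem_sdiff]
      refine ⟨hy1 k hk.1 hr, fun hrR => ?_⟩
      have : r ∈ y k ∩ R₁ := Finset.mem_inter.2 ⟨hr, hrR⟩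
      simp [h] at this
    have := Finset.card_le_card hsub
    have h2 := hmax k hk.2
    have h3 := hy2 k hk.1
    omega
  have hdisj : ((Z \ K₁ : Finset ι) : Set ι).PairwiseDisjoint (fun k => y k ∩ R₁) := by
    intro a ha b hb hab
    have ha' : a ∈ Z := (Finset.mem_sdiff.1 ha).1
    have hb' : b ∈ Z := (Finset.mem_sdiff.1 hb).1
    exact (hy3 ha' hb' hab).mono Finset.inter_subset_left Finset.inter_subset_left
  have hle : (Z \ K₁).card ≤ R₁.card := by
    calc (Z \ K₁).card ≤ ((Z \ K₁).biUnion (fun k => y k ∩ R₁)).card :=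
          Finset.card_le_card_biUnion hdisj key
      _ ≤ R₁.card := Finset.card_le_card (by
          intro r hr
          rcases Finset.mem_biUnion.1 hr with ⟨k, _, hk⟩
          exact (Finset.mem_inter.1 hk).2)
  have := Finset.card_le_card_sdiff_add_card (s := Z) (t := K₁)
  omega
end
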